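/- Let n = 2p with p ≥ 2 an integer, set a_n = n^{1/(n-1)} - 1 and α_j = sin(2jπ/n)/(1 - cos(2jπ/n)) for 1 ≤ j ≤ n - 1. Let a be a real number with a_{2p} < a < 1 and let b > 0 satisfy b < (a_{2p}/2)·α_{p-1}. Then every v ∈ ℂ with Re v < a/2 - b satisfies |(v - a)^{2p} - v^{2p}| > 2p·(b·a_{2p})^p. -/

import Mathlib

open Real Complex Finset

private lemma pair_abs (z : ℂ) (t : ℝ) :
    2 * |z.re| * t ≤ ‖z - Complex.I * (t : ℂ)‖ * ‖z + Complex.I * (t : ℂ)‖ := by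
  have h2 : (0:ℝ) ≤ ‖z - Complex.I * (t : ℂ)‖ * ‖z + Complex.I * (t : ℂ)‖ := by
    positivity
  refine le_of_pow_le_pow_left₀ two_ne_zero h2 ?_
  conv_rhs => rw [mul_pow]
  rw [Complex.sq_norm, Complex.sq_norm]
  simp only [Complex.normSq_apply, Complex.sub_re, Complex.add_re, Complex.sub_im, Complex.add_im,
    Complex.mul_re, Complex.mul_im, Complex.I_re, Complex.I_im, Complex.ofReal_re,
    Complex.ofReal_im]
  nlinarith [sq_nonneg (z.re^2 + z.im^2 - t^2), _root_.sq_abs z.re, sq_nonneg z.re,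
    sq_nonneg (z.im*t)]

private lemma half_angle (x : ℝ) (hs : Real.sin x ≠ 0) :
    (1 - Complex.exp (2 * x * Complex.I)) * (Complex.I * ((Real.cos x / Real.sin x : ℝ) : ℂ))
      = 1 + Complex.exp (2 * x * Complex.I) := by
  have hx : (2 * x : ℂ) * Complex.I = ((2*x : ℝ) : ℂ) * Complex.I := by push_cast; ring
  rw [hx, Complex.exp_mul_I, ← Complex.ofReal_cos, ← Complex.ofReal_sin]
  have hc : Real.cos (2*x) = 1 - 2 * Real.sin x ^ 2 := by
    rw [Real.cos_two_mul]; nlinarith [Real.sin_sq_add_cos_sq x]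
  have hs2 : Real.sin (2*x) = 2 * Real.sin x * Real.cos x := Real.sin_two_mul x
  set s := Real.sin x with hsdef
  set c := Real.cos x with hcdef
  have hs' : (s : ℂ) ≠ 0 := Complex.ofReal_ne_zero.mpr hs
  have hpy : (s : ℂ)^2 + (c : ℂ)^2 = 1 := by
    have := Real.sin_sq_add_cos_sq x
    push_cast [← hsdef, ← hcdef] at *
    exact_mod_cast congrArg (Complex.ofReal) this
  rw [hc, hs2]
  push_cast
  field_simp
  linear_combination (-2*(s:ℂ)*Complex.I^2) * hpy + (-2*(s:ℂ)+2*(s:ℂ)^3) * Complex.I_sq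

set_option maxHeartbeats 1000000 in
theorem stmt_13 (p : ℕ) (hp : 2 ≤ p) (n : ℕ) (hn : n = 2 * p)
    (an : ℝ) (han : an = (n : ℝ) ^ ((1 : ℝ) / ((n : ℝ) - 1)) - 1)
    (α : ℕ → ℝ)
    (hα : ∀ j, 1 ≤ j → j ≤ n - 1 →
      α j = Real.sin (2 * j * Real.pi / n) / (1 - Real.cos (2 * j * Real.pi / n)))
    (a : ℝ) (ha : an < a) (ha1 : a < 1)
    (b : ℝ) (hb : 0 < b) (hbα : b < (an / 2) * α (p - 1)) :
    ∀ v : ℂ, v.re < a / 2 - b →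
      ‖(v - (a : ℝ)) ^ (2 * p) - v ^ (2 * p)‖ > 2 * p * (b * an) ^ p := by
  have hn4 : 4 ≤ n := by omega
  have hn0 : n ≠ 0 := by omega
  have hnR1 : (1:ℝ) < (n:ℝ) := by exact_mod_cast (by omega : 1 < n)
  have hnR0 : (0:ℝ) < (n:ℝ) := by linarith
  have hpR0 : (0:ℝ) < (p:ℝ) := by exact_mod_cast (by omega : 0 < p)
  have han_pos : 0 < an := by
    rw [han]
    have : (1:ℝ) < (n:ℝ) ^ ((1 : ℝ) / ((n : ℝ) - 1)) := by
      rw [Real.one_lt_rpow_iff_of_pos hnR0]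
      refine Or.inl ⟨hnR1, ?_⟩
      have hgt : (0:ℝ) < (n:ℝ) - 1 := by linarith
      positivity
    linarith
  have ha0 : 0 < a := lt_trans han_pos ha
  set ζ : ℂ := Complex.exp (2 * ↑π * Complex.I / n) with hζdef
  have hζ : IsPrimitiveRoot ζ n := Complex.isPrimitiveRoot_exp n hn0
  obtain ⟨m, hm⟩ : ∃ m, n = m + 1 := ⟨n - 1, by omega⟩
  have hprodζ : ∏ k ∈ range m, (1 - ζ ^ (k+1)) = (n : ℂ) := by
    have := IsPrimitiveRoot.prod_one_sub_pow_eq_order (hm ▸ hζ)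
    rw [this, hm]; push_cast; ring
  intro v hv
  set z : ℂ := v - ((a/2 : ℝ) : ℂ) with hz
  have hzre : z.re = v.re - a/2 := by simp [hz]
  have hxb : b < |z.re| := by
    rw [abs_of_neg (by rw [hzre]; linarith : z.re < 0)]
    rw [hzre]; linarith
  set θ : ℕ → ℝ := fun j => j * π / n with hθdef
  set ct : ℕ → ℝ := fun j => Real.cos (θ j) / Real.sin (θ j) with hctdef
  set t : ℕ → ℝ := fun j => (a/2) * ct j with htdef
  set g : ℕ → ℝ := fun j => ‖z - Complex.I * ((t j : ℝ) : ℂ)‖ with hgdef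
  have pi_pos := Real.pi_pos
  have hθmono : ∀ i j : ℕ, i < j → θ i < θ j := by
    intro i j hij
    have hij' : (i:ℝ) < (j:ℝ) := by exact_mod_cast hij
    simp only [hθdef]
    gcongr
  have hθhalf : θ p = π / 2 := by
    have hpR : (p:ℝ) ≠ 0 := ne_of_gt hpR0
    simp only [hθdef, hn]
    push_cast
    field_simp
  have hθpos : ∀ j, 1 ≤ j → 0 < θ j := by
    intro j hj
    have hj' : (0:ℝ) < (j:ℝ) := by exact_mod_cast (by omega : 0 < j)
    simp only [hθdef]
    positivity
  have hθltpi : ∀ j, j ≤ n - 1 → θ j < π := by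
    intro j hj
    have : θ j < θ n := hθmono j n (by omega)
    have hθn : θ n = π := by
      simp only [hθdef]; field_simp
    linarith
  have hsin : ∀ j, 1 ≤ j → j ≤ n - 1 → 0 < Real.sin (θ j) :=
    fun j h1 h2 => Real.sin_pos_of_pos_of_lt_pi (hθpos j h1) (hθltpi j h2)
  have hcos : ∀ j, 1 ≤ j → j < p → 0 < Real.cos (θ j) := by
    intro j h1 h2
    apply Real.cos_pos_of_mem_Ioo
    constructor
    · have := hθpos j h1; linarith
    · have := hθmono j p h2; rw [hθhalf] at this; exact this
  have ht_pos : ∀ j, 1 ≤ j → j < p → 0 < t j := by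
    intro j h1 h2
    have hs := hsin j h1 (by omega)
    have hc := hcos j h1 h2
    simp only [htdef, hctdef]
    positivity
  -- power of ζ
  have hζpow : ∀ j : ℕ, ζ ^ j = Complex.exp (2 * (θ j : ℝ) * Complex.I) := by
    intro j
    rw [hζdef, ← Complex.exp_nat_mul]
    congr 1
    have hnC : (n:ℂ) ≠ 0 := Nat.cast_ne_zero.mpr hn0
    simp only [hθdef]
    push_cast
    field_simp
  -- factor identity
  have hfac : ∀ j, 1 ≤ j → j ≤ n - 1 →
      (v - (a:ℂ)) - ζ ^ j * v = (1 - ζ ^ j) * (z - Complex.I * ((t j : ℝ) : ℂ)) := by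
    intro j h1 h2
    have hs : Real.sin (θ j) ≠ 0 := ne_of_gt (hsin j h1 h2)
    have hk := half_angle (θ j) hs
    rw [← hζpow j] at hk
    rw [hz]
    simp only [htdef, hctdef]
    push_cast at hk ⊢
    linear_combination ((a:ℂ)/2) * hk
  -- factorization of the polynomial
  have hP : (v - (a:ℂ)) ^ n - v ^ n = ∏ j ∈ range n, ((v - (a:ℂ)) - ζ ^ j * v) := by
    have h := X_pow_sub_C_eq_prod hζ (by omega : 0 < n) (rfl : v ^ n = v ^ n)
    have := congrArg (Polynomial.eval (v - (a:ℂ))) h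
    simpa [Polynomial.eval_prod] using this
  have hP2 : (v - (a:ℂ)) ^ n - v ^ n
      = (-(a:ℂ)) * ((n:ℂ) * ∏ k ∈ range m, (z - Complex.I * ((t (k+1) : ℝ) : ℂ))) := by
    rw [hP, hm, Finset.prod_range_succ']
    have h0 : (v - (a:ℂ)) - ζ ^ 0 * v = -(a:ℂ) := by simp
    rw [h0]
    have hcongr : ∀ k ∈ range m, (v - (a:ℂ)) - ζ ^ (k+1) * v
        = (1 - ζ ^ (k+1)) * (z - Complex.I * ((t (k+1) : ℝ) : ℂ)) := by
      intro k hk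
      rw [Finset.mem_range] at hk
      exact hfac (k+1) (by omega) (by omega)
    rw [Finset.prod_congr rfl hcongr, Finset.prod_mul_distrib, hprodζ]
    rw [hm]
    ring
  -- absolute value
  have habs : ‖(v - (a:ℂ)) ^ n - v ^ n‖ = a * ((n:ℝ) * ∏ k ∈ range m, g (k+1)) := by
    rw [hP2, norm_mul, norm_mul, norm_prod]
    simp only [norm_neg, Complex.norm_real, Real.norm_eq_abs, Complex.norm_natCast]
    rw [abs_of_pos ha0]
  -- reindex to Ico 1 n
  have hg1 : ∏ k ∈ range m, g (k+1) = ∏ j ∈ Ico 1 n, g j := by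
    rw [Finset.prod_Ico_eq_prod_range]
    have : n - 1 = m := by omega
    rw [this]
    exact Finset.prod_congr rfl fun k _ => by rw [add_comm]
  have hmap : ∏ j ∈ Ico 1 p, g (n - j) = ∏ j ∈ Ico (p+1) n, g j := by
    refine Finset.prod_nbij' (fun j => n - j) (fun j => n - j) ?_ ?_ ?_ ?_ ?_
    · intro j hj; simp only [Finset.mem_Ico] at *; omega
    · intro j hj; simp only [Finset.mem_Ico] at *; omega
    · intro j hj; simp only [Finset.mem_Ico] at hj; omega
    · intro j hj; simp only [Finset.mem_Ico] at hj; omega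
    · intro j hj; rfl
  have hsplit : ∏ j ∈ Ico 1 n, g j = g p * ∏ j ∈ Ico 1 p, (g j * g (n-j)) := by
    rw [← Finset.prod_Ico_consecutive g (by omega : 1 ≤ p) (by omega : p ≤ n)]
    rw [Finset.prod_eq_prod_Ico_succ_bot (by omega : p < n) g]
    rw [Finset.prod_mul_distrib, hmap]
    ring
  -- pair lower bounds
  have hpair : ∀ j ∈ Ico 1 p, 2 * b * t j < g j * g (n-j) := by
    intro j hj
    rw [Finset.mem_Ico] at hj
    obtain ⟨hj1, hj2⟩ := hj
    have htj := ht_pos j hj1 hj2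
    have hgn : g (n-j) = ‖z + Complex.I * ((t j : ℝ) : ℂ)‖ := by
      have hjn : j ≤ n := by omega
      have hcast : ((n - j : ℕ) : ℝ) = (n:ℝ) - (j:ℝ) := by
        push_cast [Nat.cast_sub hjn]; ring
      have hθeq : θ (n-j) = π - θ j := by
        simp only [hθdef, hcast]
        field_simp
      have htneg : t (n-j) = - t j := by
        simp only [htdef, hctdef, hθeq, Real.cos_pi_sub, Real.sin_pi_sub]
        ring
      rw [hgdef]
      simp only [htneg]
      congr 1
      push_cast
      ring
    have h2b : 2 * b * t j < 2 * |z.re| * t j := by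
      have := mul_lt_mul_of_pos_right hxb htj
      nlinarith
    calc 2 * b * t j < 2 * |z.re| * t j := h2b
      _ ≤ g j * g (n-j) := by rw [hgn]; exact pair_abs z (t j)
  have hgp : b < g p := by
    have htp : t p = 0 := by
      simp only [htdef, hctdef, hθhalf, Real.cos_pi_div_two]
      ring
    have hgpz : g p = ‖z‖ := by
      rw [hgdef]; simp [htp]
    rw [hgpz]
    calc b < |z.re| := hxb
      _ ≤ ‖z‖ := Complex.abs_re_le_norm z
  -- cotangent product equals 1
  have hctprod : ∏ j ∈ Ico 1 p, ct j = 1 := by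
    have hsin' : ∀ j ∈ Ico 1 p, (0:ℝ) < Real.sin (θ j) := by
      intro j hj; rw [Finset.mem_Ico] at hj
      exact hsin j hj.1 (by omega)
    have hcs : ∏ j ∈ Ico 1 p, Real.cos (θ j) = ∏ j ∈ Ico 1 p, Real.sin (θ j) := by
      refine Finset.prod_nbij' (fun j => p - j) (fun j => p - j) ?_ ?_ ?_ ?_ ?_
      · intro j hj; simp only [Finset.mem_Ico] at *; omega
      · intro j hj; simp only [Finset.mem_Ico] at *; omega
      · intro j hj; simp only [Finset.mem_Ico] at hj; omega
      · intro j hj; simp only [Finset.mem_Ico] at hj; omega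
      · intro j hj
        rw [Finset.mem_Ico] at hj
        have hjp : j ≤ p := by omega
        have hcast : ((p - j : ℕ) : ℝ) = (p:ℝ) - (j:ℝ) := by
          push_cast [Nat.cast_sub hjp]; ring
        have hθeq : θ (p-j) = π/2 - θ j := by
          simp only [hθdef, hcast, hn]
          push_cast
          field_simp
        rw [hθeq, Real.sin_pi_div_two_sub]
    simp only [hctdef]
    rw [Finset.prod_div_distrib, hcs]
    apply div_self
    exact ne_of_gt (Finset.prod_pos hsin')
  -- strict product inequality
  have hne : (Ico 1 p).Nonempty := by
    rw [Finset.nonempty_Ico]; omega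
  have hLpos : ∀ j ∈ Ico 1 p, (0:ℝ) < 2 * b * t j := by
    intro j hj; rw [Finset.mem_Ico] at hj
    have := ht_pos j hj.1 hj.2
    positivity
  have hprodlt : ∏ j ∈ Ico 1 p, (2 * b * t j) < ∏ j ∈ Ico 1 p, (g j * g (n-j)) :=
    Finset.prod_lt_prod_of_nonempty hLpos hpair hne
  have hstep : b * ∏ j ∈ Ico 1 p, (2 * b * t j) < g p * ∏ j ∈ Ico 1 p, (g j * g (n-j)) := by
    apply mul_lt_mul'' hgp hprodlt hb.le
    exact Finset.prod_nonneg fun j hj => (hLpos j hj).le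
  -- compute the lower product
  have hprod2 : ∏ j ∈ Ico 1 p, (2 * b * t j) = (b*a)^(p-1) := by
    have hcongr : ∀ j ∈ Ico 1 p, 2 * b * t j = (b*a) * ct j := by
      intro j _; simp only [htdef]; ring
    rw [Finset.prod_congr rfl hcongr, Finset.prod_mul_distrib, Finset.prod_const,
      Nat.card_Ico, hctprod, mul_one]
  -- final assembly
  have habs2 : ‖(v - (a:ℂ)) ^ n - v ^ n‖
      = a * ((n:ℝ) * (g p * ∏ j ∈ Ico 1 p, (g j * g (n-j)))) := by
    rw [habs, hg1, hsplit]
  have hfinal : (n:ℝ) * (b*a)^p < ‖(v - (a:ℂ)) ^ n - v ^ n‖ := by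
    rw [habs2]
    have hba : (b*a)^p = (b*a)^(p-1) * (b*a) := by
      rw [← pow_succ]
      congr 1
      omega
    have h1 : a * ((n:ℝ) * (b * (b*a)^(p-1))) = (n:ℝ) * (b*a)^p := by
      rw [hba]; ring
    rw [← h1]
    have han2 : (0:ℝ) < a * (n:ℝ) := by positivity
    rw [← hprod2]
    exact mul_lt_mul_of_pos_left (mul_lt_mul_of_pos_left hstep hnR0) ha0
  have htarget : 2 * (p:ℝ) * (b * an) ^ p < (n:ℝ) * (b*a)^p := by
    have hnp : (n:ℝ) = 2 * (p:ℝ) := by rw [hn]; push_cast; ring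
    rw [hnp]
    apply mul_lt_mul_of_pos_left _ (by positivity)
    apply pow_lt_pow_left₀ _ (by positivity) (by omega)
    nlinarith
  have hgoal := lt_trans htarget hfinal
  rw [← hn]
  exact hgoal
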